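/- Let n be a non-negative integer and let r be a real number with 0 < r < 1/2. Then (1/(2πi)) · ∮_{|z|=r} dz / (z^{n+1} (1−z)^{n} (1−2z)) = 4^n/2 + (1/2)·C(2n, n). -/

import Mathlib

open Complex Metric Finset

namespace KS15

noncomputable def ff (m k : ℕ) (z : ℂ) : ℂ :=
  1 / (z ^ (m + 1) * (1 - z) ^ k * (1 - 2 * z))

lemma cball_facts {r : ℝ} (hr : r < 1 / 2) {z : ℂ} (hz : z ∈ closedBall (0:ℂ) r) :
    (1 : ℂ) - z ≠ 0 ∧ (1 : ℂ) - 2 * z ≠ 0 := by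
  have hn : ‖z‖ ≤ r := by simpa using mem_closedBall_zero_iff.mp hz
  constructor
  · refine sub_ne_zero.mpr fun h => ?_
    rw [← h] at hn
    simp at hn; linarith
  · refine sub_ne_zero.mpr fun h => ?_
    have hz2 : z = 1 / 2 := by linear_combination -h / 2
    rw [hz2] at hn
    norm_num at hn
    linarith

lemma sphere_facts {r : ℝ} (hr0 : 0 < r) (hr : r < 1 / 2) {z : ℂ}
    (hz : z ∈ sphere (0:ℂ) r) :
    z ≠ 0 ∧ (1 : ℂ) - z ≠ 0 ∧ (1 : ℂ) - 2 * z ≠ 0 := by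
  have hn : ‖z‖ = r := by simpa using mem_sphere_zero_iff_norm.mp hz
  have hzc : z ∈ closedBall (0:ℂ) r := sphere_subset_closedBall hz
  refine ⟨?_, (cball_facts hr hzc).1, (cball_facts hr hzc).2⟩
  intro h
  rw [h] at hn; simp at hn; exact absurd hn.symm (ne_of_gt hr0)

lemma ff_integrable {r : ℝ} (hr0 : 0 < r) (hr : r < 1 / 2) (m k : ℕ) :
    CircleIntegrable (ff m k) 0 r := by
  refine ContinuousOn.circleIntegrable hr0.le ?_
  refine ContinuousOn.div continuousOn_const (by fun_prop) fun z hz => ?_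
  obtain ⟨h0, h1, h2⟩ := sphere_facts hr0 hr hz
  exact mul_ne_zero (mul_ne_zero (pow_ne_zero _ h0) (pow_ne_zero _ h1)) h2

lemma circleIntegral_add' {f g : ℂ → ℂ} {c : ℂ} {R : ℝ}
    (hf : CircleIntegrable f c R) (hg : CircleIntegrable g c R) :
    (∮ z in C(c, R), (f z + g z)) = (∮ z in C(c, R), f z) + ∮ z in C(c, R), g z := by
  simp only [circleIntegral, smul_add]
  exact intervalIntegral.integral_add hf.out hg.out

lemma J0k {r : ℝ} (hr0 : 0 < r) (hr : r < 1 / 2) (k : ℕ) :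
    (∮ z in C(0, r), ff 0 k z) = 2 * Real.pi * I := by
  have hd : DifferentiableOn ℂ (fun z : ℂ => ((1 - z) ^ k * (1 - 2 * z))⁻¹)
      (closedBall (0:ℂ) r) := by
    refine DifferentiableOn.inv (by fun_prop) fun z hz => ?_
    obtain ⟨h1, h2⟩ := cball_facts hr hz
    exact mul_ne_zero (pow_ne_zero _ h1) h2
  have h0 : (0:ℂ) ∈ ball (0:ℂ) r := by simpa using hr0
  have key := hd.circleIntegral_sub_inv_smul h0
  have congr1 : (∮ z in C(0, r), ff 0 k z)
      = ∮ z in C(0, r), (z - 0)⁻¹ • ((1 - z) ^ k * (1 - 2 * z))⁻¹ := by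
    refine circleIntegral.integral_congr hr0.le fun z hz => ?_
    obtain ⟨h0, h1, h2⟩ := sphere_facts hr0 hr hz
    simp only [ff, smul_eq_mul, sub_zero, zero_add, pow_one, one_div, mul_inv]
    ring
  rw [congr1, key]
  simp

lemma Jm0 {r : ℝ} (hr0 : 0 < r) (hr : r < 1 / 2) (m : ℕ) :
    (∮ z in C(0, r), ff m 0 z) = 2 * Real.pi * I * 2 ^ m := by
  induction m with
  | zero => simp only [pow_zero, mul_one]; exact J0k hr0 hr 0
  | succ m ih =>
    have hzpow : CircleIntegrable (fun z : ℂ => (z - 0) ^ (-(m + 2 : ℤ))) 0 r := by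
      rw [circleIntegrable_sub_zpow_iff]
      right; right
      intro h
      have h2 := mem_sphere_zero_iff_norm.mp h
      rw [abs_of_pos hr0] at h2
      simp at h2
      linarith
    have key : (∮ z in C(0, r), ff (m + 1) 0 z)
        = (∮ z in C(0, r), ((z - 0) ^ (-(m + 2 : ℤ)) + 2 * ff m 0 z)) := by
      refine circleIntegral.integral_congr hr0.le fun z hz => ?_
      obtain ⟨h0, h1, h2⟩ := sphere_facts hr0 hr hz
      simp only [ff, sub_zero, zpow_neg, pow_zero, mul_one]
      rw [show ((m : ℤ) + 2) = ((m + 2 : ℕ) : ℤ) by push_cast; ring, zpow_natCast]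
      have hA : z ^ (m + 1 + 1) * (1 - 2 * z) ≠ 0 := mul_ne_zero (pow_ne_zero _ h0) h2
      have hB : z ^ (m + 2) ≠ 0 := pow_ne_zero _ h0
      have hC : z ^ (m + 1) * (1 - 2 * z) ≠ 0 := mul_ne_zero (pow_ne_zero _ h0) h2
      rw [inv_eq_one_div, mul_one_div, div_add_div _ _ hB hC,
        div_eq_div_iff hA (mul_ne_zero hB hC)]
      ring
    have h2int : CircleIntegrable (fun z => 2 * ff m 0 z) 0 r := by
      have h := (ff_integrable hr0 hr m 0).smul (2 : ℂ)
      exact h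
    rw [key, circleIntegral_add' hzpow h2int,
      circleIntegral.integral_sub_zpow_of_ne (by omega) 0 0 r]
    have hsm : (∮ z in C(0, r), 2 * ff m 0 z) = 2 * ∮ z in C(0, r), ff m 0 z := by
      simpa using circleIntegral.integral_smul (2 : ℂ) (ff m 0) 0 r
    rw [hsm, ih]
    ring

lemma Jrec {r : ℝ} (hr0 : 0 < r) (hr : r < 1 / 2) (m k : ℕ) :
    (∮ z in C(0, r), ff (m + 1) (k + 1) z)
      = (∮ z in C(0, r), ff (m + 1) k z) + ∮ z in C(0, r), ff m (k + 1) z := by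
  rw [← circleIntegral_add' (ff_integrable hr0 hr _ _) (ff_integrable hr0 hr _ _)]
  refine circleIntegral.integral_congr hr0.le fun z hz => ?_
  obtain ⟨h0, h1, h2⟩ := sphere_facts hr0 hr hz
  simp only [ff]
  have hD0 : z ^ (m + 1 + 1) * (1 - z) ^ (k + 1) * (1 - 2 * z) ≠ 0 :=
    mul_ne_zero (mul_ne_zero (pow_ne_zero _ h0) (pow_ne_zero _ h1)) h2
  have hD1 : z ^ (m + 1 + 1) * (1 - z) ^ k * (1 - 2 * z) ≠ 0 :=
    mul_ne_zero (mul_ne_zero (pow_ne_zero _ h0) (pow_ne_zero _ h1)) h2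
  have hD2 : z ^ (m + 1) * (1 - z) ^ (k + 1) * (1 - 2 * z) ≠ 0 :=
    mul_ne_zero (mul_ne_zero (pow_ne_zero _ h0) (pow_ne_zero _ h1)) h2
  rw [div_add_div _ _ hD1 hD2, div_eq_div_iff hD0 (mul_ne_zero hD1 hD2)]
  ring

lemma Jform {r : ℝ} (hr0 : 0 < r) (hr : r < 1 / 2) (k : ℕ) : ∀ m : ℕ,
    (∮ z in C(0, r), ff m (k + 1) z)
      = 2 * Real.pi * I * ∑ j ∈ range (m + 1), ((k + j).choose j : ℂ) * 2 ^ (m - j) := by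
  induction k with
  | zero =>
    intro m
    induction m with
    | zero => simpa using J0k hr0 hr 1
    | succ m ihm =>
      rw [Jrec hr0 hr m 0, Jm0 hr0 hr (m + 1), ihm,
        Finset.sum_range_succ' (fun j => ((0 + j).choose j : ℂ) * 2 ^ (m + 1 - j))]
      simp only [Nat.succ_sub_succ, Nat.choose_self, Nat.sub_zero, Nat.zero_add, Nat.add_zero,
        Nat.choose_zero_right]
      push_cast
      ring
  | succ k ihk =>
    intro m
    induction m with
    | zero => simpa using J0k hr0 hr (k + 2)
    | succ m ihm =>
      rw [Jrec hr0 hr m (k + 1), ihk (m + 1), ihm,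
        Finset.sum_range_succ' (fun j => (((k + 1) + j).choose j : ℂ) * 2 ^ (m + 1 - j)),
        Finset.sum_range_succ' (fun j => ((k + j).choose j : ℂ) * 2 ^ (m + 1 - j))]
      simp only [Nat.succ_sub_succ, Nat.sub_zero, Nat.add_zero, Nat.choose_zero_right]
      have pascal : ∀ i ∈ range (m + 1),
          (((k + 1 + (i + 1)).choose (i + 1) : ℂ)) * 2 ^ (m - i)
            = ((k + (i + 1)).choose (i + 1) : ℂ) * 2 ^ (m - i)
              + ((k + 1 + i).choose i : ℂ) * 2 ^ (m - i) := by
        intro i _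
        have h : k + 1 + (i + 1) = (k + 1 + i) + 1 := by omega
        have h2 : (k + 1 + i).choose (i + 1) = (k + (i + 1)).choose (i + 1) := by
          congr 1; omega
        rw [h, Nat.choose_succ_succ, h2]
        push_cast
        ring
      rw [Finset.sum_congr rfl pascal, Finset.sum_add_distrib]
      push_cast
      ring

lemma choose_double (n : ℕ) :
    ((2 * n + 2).choose (n + 1) : ℂ) = 2 * ((2 * n + 1).choose (n + 1) : ℂ) := by
  have h : (2 * n + 2).choose (n + 1) = (2 * n + 1).choose n + (2 * n + 1).choose (n + 1) :=
    Nat.choose_succ_succ _ _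
  have hsymm : (2 * n + 1).choose n = (2 * n + 1).choose (n + 1) := by
    rw [← Nat.choose_symm (by omega : n + 1 ≤ 2 * n + 1)]
    congr 1
    omega
  rw [h, hsymm]
  push_cast
  ring

lemma W2 (n : ℕ) :
    (∑ j ∈ range (n + 1 + 1), ((n + j).choose j : ℂ) * 2 ^ (n + 1 - j))
      = 2 * (∑ j ∈ range (n + 1), ((n + j).choose j : ℂ) * 2 ^ (n - j))
        + ((2 * n + 1).choose (n + 1) : ℂ) := by
  rw [Finset.sum_range_succ]
  have e1 : ∀ j ∈ range (n + 1),
      ((n + j).choose j : ℂ) * 2 ^ (n + 1 - j)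
        = 2 * (((n + j).choose j : ℂ) * 2 ^ (n - j)) := by
    intro j hj
    have hj' : j ≤ n := by simpa [Nat.lt_succ_iff] using hj
    have h : n + 1 - j = (n - j) + 1 := by omega
    rw [h, pow_succ]
    ring
  rw [Finset.sum_congr rfl e1, ← Finset.mul_sum]
  have h : n + (n + 1) = 2 * n + 1 := by omega
  rw [h]
  norm_num

lemma A_eq : ∀ n : ℕ,
    (∑ j ∈ range (n + 1), ((n + j).choose j : ℂ) * 2 ^ (n - j)) = 4 ^ n := by
  intro n
  induction n with
  | zero => simp
  | succ n ih =>
    have f1 : (∑ j ∈ range (n + 1 + 1), ((n + 1 + j).choose j : ℂ) * 2 ^ (n + 1 - j))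
        = 2 ^ (n + 1) + (∑ i ∈ range (n + 1), ((n + 1 + i).choose i : ℂ) * 2 ^ (n - i))
          + (∑ i ∈ range (n + 1), ((n + 1 + i).choose (i + 1) : ℂ) * 2 ^ (n - i)) := by
      rw [Finset.sum_range_succ' (fun j => ((n + 1 + j).choose j : ℂ) * 2 ^ (n + 1 - j))]
      simp only [Nat.succ_sub_succ, Nat.sub_zero, Nat.add_zero, Nat.choose_zero_right]
      have pascal : ∀ i ∈ range (n + 1),
          ((n + 1 + (i + 1)).choose (i + 1) : ℂ) * 2 ^ (n - i)
            = ((n + 1 + i).choose i : ℂ) * 2 ^ (n - i)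
              + ((n + 1 + i).choose (i + 1) : ℂ) * 2 ^ (n - i) := by
        intro i _
        have h : n + 1 + (i + 1) = (n + 1 + i) + 1 := by omega
        rw [h, Nat.choose_succ_succ]
        push_cast
        ring
      rw [Finset.sum_congr rfl pascal, Finset.sum_add_distrib]
      push_cast
      ring
    have f2 : (∑ j ∈ range (n + 1 + 1), ((n + 1 + j).choose j : ℂ) * 2 ^ (n + 1 - j))
        = 2 * (∑ i ∈ range (n + 1), ((n + 1 + i).choose i : ℂ) * 2 ^ (n - i))
          + ((2 * n + 2).choose (n + 1) : ℂ) := by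
      rw [Finset.sum_range_succ]
      have e1 : ∀ j ∈ range (n + 1),
          ((n + 1 + j).choose j : ℂ) * 2 ^ (n + 1 - j)
            = 2 * (((n + 1 + j).choose j : ℂ) * 2 ^ (n - j)) := by
        intro j hj
        have hj' : j ≤ n := by simpa [Nat.lt_succ_iff] using hj
        have h : n + 1 - j = (n - j) + 1 := by omega
        rw [h, pow_succ]
        ring
      rw [Finset.sum_congr rfl e1, ← Finset.mul_sum]
      have h : n + 1 + (n + 1) = 2 * n + 2 := by omega
      rw [h]
      norm_num
    have f3 : (∑ i ∈ range (n + 1), ((n + 1 + i).choose (i + 1) : ℂ) * 2 ^ (n - i))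
          + 2 ^ (n + 1)
        = 2 * (∑ j ∈ range (n + 1), ((n + j).choose j : ℂ) * 2 ^ (n - j))
          + ((2 * n + 1).choose (n + 1) : ℂ) := by
      rw [← W2 n,
        Finset.sum_range_succ' (fun j => ((n + j).choose j : ℂ) * 2 ^ (n + 1 - j))]
      simp only [Nat.succ_sub_succ, Nat.sub_zero, Nat.add_zero, Nat.choose_zero_right]
      have e : ∀ i ∈ range (n + 1),
          ((n + (i + 1)).choose (i + 1) : ℂ) * 2 ^ (n - i)
            = ((n + 1 + i).choose (i + 1) : ℂ) * 2 ^ (n - i) := by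
        intro i _
        congr 3
        omega
      rw [Finset.sum_congr rfl e]
      push_cast
      ring
    have h4 := choose_double n
    linear_combination 2 * f1 - f2 + 2 * f3 - h4 + 4 * ih

end KS15

open Complex KS15 Finset

/-- Lemma 4.2 (Lemma 15) of Krattenthaler–Schneider. -/
theorem contour_integral_lemma15 (n : ℕ) (r : ℝ) (hr0 : 0 < r) (hr : r < 1 / 2) :
    (1 / (2 * (Real.pi : ℂ) * Complex.I)) *
      (∮ z in C(0, r), 1 / (z ^ (n + 1) * (1 - z) ^ n * (1 - 2 * z)))
    = (4 : ℂ) ^ n / 2 + (1 / 2 : ℂ) * ((2 * n).choose n : ℂ) := by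
  have hint : (∮ z in C(0, r), 1 / (z ^ (n + 1) * (1 - z) ^ n * (1 - 2 * z)))
      = ∮ z in C(0, r), ff n n z := rfl
  have h2pi : (2 * (Real.pi : ℂ) * Complex.I) ≠ 0 := Complex.two_pi_I_ne_zero
  rw [hint]
  cases n with
  | zero =>
    rw [J0k hr0 hr 0]
    field_simp
    norm_num
  | succ k =>
    rw [Jform hr0 hr k (k + 1)]
    have hS : (∑ j ∈ range (k + 1 + 1), ((k + j).choose j : ℂ) * 2 ^ (k + 1 - j))
        = 2 * 4 ^ k + ((2 * k + 1).choose (k + 1) : ℂ) := by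
      rw [W2 k, A_eq k]
    have hn : 2 * (k + 1) = 2 * k + 2 := by ring
    rw [hS, hn, choose_double k]
    field_simp
    ring
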